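/- Let α > 0, s > 0, B ≥ 0, and let β : [0,∞) → ℝ be continuous with 0 ≤ β(t) ≤ B for all t. Define the saturation function sat(x) = max(−s, min(s, x)). If v : [0,∞) → ℝ is differentiable and satisfies v'(t) = β(t)·(1 − exp(v(t))) − sat(α·v(t)) for all t ≥ 0, then t ↦ |v(t)| is nonincreasing and v(t) → 0 as t → ∞. -/

import Mathlib

open Set Filter Real

/-- Helper: a function with nonpositive derivative on `Ici 0` is antitone there. -/
lemma stmt_17_aux (f f' : ℝ → ℝ)
    (hf : ∀ t ∈ Set.Ici (0:ℝ), HasDerivAt f (f' t) t)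
    (h' : ∀ t ∈ Set.Ici (0:ℝ), f' t ≤ 0) :
    AntitoneOn f (Set.Ici 0) := by
  apply antitoneOn_of_deriv_nonpos (convex_Ici 0)
  · exact fun t ht => ((hf t ht).differentiableAt).continuousAt.continuousWithinAt
  · intro t ht
    rw [interior_Ici] at ht
    exact ((hf t (le_of_lt (Set.mem_Ioi.mp ht))).differentiableAt).differentiableWithinAt
  · intro t ht
    rw [interior_Ici] at ht
    rw [(hf t (le_of_lt (Set.mem_Ioi.mp ht))).deriv]
    exact h' t (le_of_lt (Set.mem_Ioi.mp ht))

/-- Reduced scalar form of the tracking result (Theorem 5.4) with vanished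
delay state: the logarithmic tracking error `v` obeying
`v' = β(t)(1 - e^v) - sat(α v)` with `β` continuous, nonnegative and bounded,
has `|v|` nonincreasing and `v(t) → 0`. -/
theorem stmt_17 (α s B : ℝ) (hα : 0 < α) (hs : 0 < s) (hB : 0 ≤ B)
    (β v : ℝ → ℝ)
    (hβc : ContinuousOn β (Set.Ici 0))
    (hβ : ∀ t, 0 ≤ t → 0 ≤ β t ∧ β t ≤ B)
    (sat : ℝ → ℝ) (hsat : ∀ x, sat x = max (-s) (min s x))
    (hv : ∀ t, 0 ≤ t →
      HasDerivAt v (β t * (1 - Real.exp (v t)) - sat (α * v t)) t) :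
    AntitoneOn (fun t => |v t|) (Set.Ici 0) ∧
      Filter.Tendsto v Filter.atTop (nhds 0) := by
  set D : ℝ → ℝ := fun t => β t * (1 - Real.exp (v t)) - sat (α * v t) with hD
  -- basic facts about sat
  have hsat_mono : Monotone sat := by
    intro x y hxy
    rw [hsat, hsat]
    exact max_le_max le_rfl (min_le_min le_rfl hxy)
  have hsat_nonneg : ∀ x, 0 ≤ x → 0 ≤ sat x := by
    intro x hx
    rw [hsat]
    exact le_max_of_le_right (le_min hs.le hx)
  have hsat_nonpos : ∀ x, x ≤ 0 → sat x ≤ 0 := by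
    intro x hx
    rw [hsat]
    exact max_le (by linarith) ((min_le_right _ _).trans hx)
  -- key sign fact: v t * D t ≤ 0 on Ici 0
  have hvD : ∀ t, 0 ≤ t → v t * D t ≤ 0 := by
    intro t ht
    rcases le_total 0 (v t) with hvt | hvt
    · have h1 : 1 - Real.exp (v t) ≤ 0 := by
        have := Real.one_le_exp hvt
        linarith
      have h2 : β t * (1 - Real.exp (v t)) ≤ 0 :=
        mul_nonpos_of_nonneg_of_nonpos (hβ t ht).1 h1
      have h3 : 0 ≤ sat (α * v t) :=
        hsat_nonneg _ (mul_nonneg hα.le hvt)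
      have : D t ≤ 0 := by rw [hD]; dsimp only; linarith
      exact mul_nonpos_of_nonneg_of_nonpos hvt this
    · have h1 : 0 ≤ 1 - Real.exp (v t) := by
        have := Real.exp_le_one_iff.mpr hvt
        linarith
      have h2 : 0 ≤ β t * (1 - Real.exp (v t)) :=
        mul_nonneg (hβ t ht).1 h1
      have h3 : sat (α * v t) ≤ 0 :=
        hsat_nonpos _ (mul_nonpos_of_nonneg_of_nonpos hα.le hvt)
      have : 0 ≤ D t := by rw [hD]; dsimp only; linarith
      exact mul_nonpos_of_nonpos_of_nonneg hvt this
  -- v² is antitone on Ici 0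
  have hsq : AntitoneOn (fun t => (v t) ^ 2) (Set.Ici 0) := by
    apply stmt_17_aux _ (fun t => 2 * v t * D t)
    · intro t ht
      have := (hv t ht).fun_pow 2
      simpa [pow_one] using this
    · intro t ht
      have := hvD t ht
      nlinarith
  -- hence |v| is antitone on Ici 0
  have habs : AntitoneOn (fun t => |v t|) (Set.Ici 0) := by
    intro a ha b hb hab
    have h := hsq ha hb hab
    have h2 := Real.sqrt_le_sqrt h
    rwa [Real.sqrt_sq_eq_abs, Real.sqrt_sq_eq_abs] at h2
  refine ⟨habs, ?_⟩
  -- convergence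
  rw [Metric.tendsto_atTop]
  intro ε hε
  -- it suffices to find T ≥ 0 with |v T| < ε
  suffices hT : ∃ T, 0 ≤ T ∧ |v T| < ε by
    obtain ⟨T, hT0, hTε⟩ := hT
    refine ⟨T, fun t ht => ?_⟩
    have ht0 : (0:ℝ) ≤ t := le_trans hT0 ht
    have := habs hT0 ht0 ht
    simp only at this
    rw [Real.dist_eq, sub_zero]
    exact lt_of_le_of_lt this hTε
  by_contra hcon
  push_neg at hcon
  -- so |v T| ≥ ε for all T ≥ 0
  set δ : ℝ := min s (α * ε) with hδdef
  have hδ : 0 < δ := lt_min hs (mul_pos hα hε)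
  have hvc : ContinuousOn v (Set.Ici 0) :=
    fun t ht => (hv t ht).differentiableAt.continuousAt.continuousWithinAt
  -- no zero of v on Ici 0
  have hnz : ∀ c, 0 ≤ c → v c ≠ 0 := by
    intro c hc h0
    have := hcon c hc
    rw [h0, abs_zero] at this
    linarith
  rcases le_abs.mp (hcon 0 le_rfl) with h0 | h0
  · -- case v 0 ≥ ε: show v t ≥ ε for all t ≥ 0
    have hpos : ∀ t, 0 ≤ t → ε ≤ v t := by
      intro t ht
      rcases le_abs.mp (hcon t ht) with h | h
      · exact h
      · exfalso
        -- v t ≤ -ε < 0 < ε ≤ v 0 : IVT gives a zero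
        have hvt : v t ≤ -ε := by linarith
        have hsub : Set.Icc (v t) (v 0) ⊆ v '' Set.Icc 0 t :=
          intermediate_value_Icc' ht (hvc.mono (fun x hx => hx.1))
        obtain ⟨c, hc, hc0⟩ := hsub (show (0:ℝ) ∈ Set.Icc (v t) (v 0) from ⟨by linarith, by linarith⟩)
        exact hnz c hc.1 hc0
    -- derivative bound: D t ≤ -δ
    have hDle : ∀ t, 0 ≤ t → D t ≤ -δ := by
      intro t ht
      have h1 : 1 - Real.exp (v t) ≤ 0 := by
        have : (1:ℝ) ≤ Real.exp (v t) := Real.one_le_exp (by linarith [hpos t ht])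
        linarith
      have h2 : β t * (1 - Real.exp (v t)) ≤ 0 :=
        mul_nonpos_of_nonneg_of_nonpos (hβ t ht).1 h1
      have h3 : sat (α * ε) ≤ sat (α * v t) :=
        hsat_mono (mul_le_mul_of_nonneg_left (hpos t ht) hα.le)
      have h4 : sat (α * ε) = δ := by
        rw [hsat, hδdef]
        exact max_eq_right (by
          have : 0 < min s (α * ε) := lt_min hs (mul_pos hα hε)
          linarith)
      rw [hD]; dsimp only
      rw [h4] at h3
      linarith
    -- so v t ≤ v 0 - δ t
    have hlin : ∀ t, 0 ≤ t → v t ≤ v 0 - δ * t := by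
      intro t ht
      have hanti : AntitoneOn (fun t => v t + δ * t) (Set.Ici 0) := by
        apply stmt_17_aux _ (fun t => D t + δ)
        · intro t ht
          exact (hv t ht).add ((hasDerivAt_id t).const_mul δ |>.congr_deriv (by ring))
        · intro t ht
          have := hDle t ht
          linarith
      have := hanti (le_refl (0:ℝ)) ht ht
      simp only at this
      linarith
    -- contradiction at large t
    have h00 : ε ≤ v 0 := h0
    obtain ⟨t₀, ht₀def⟩ : ∃ t₀ : ℝ, t₀ = (v 0 - ε) / δ + 1 := ⟨_, rfl⟩
    have ht₀ : 0 ≤ t₀ := by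
      have : 0 ≤ (v 0 - ε) / δ := div_nonneg (by linarith) hδ.le
      linarith
    have h5 := hlin t₀ ht₀
    have h6 := hpos t₀ ht₀
    have h7 : δ * t₀ = (v 0 - ε) + δ := by
      rw [ht₀def, mul_add, mul_one, mul_div_cancel₀ _ (ne_of_gt hδ)]
    linarith
  · -- case v 0 ≤ -ε: show v t ≤ -ε for all t ≥ 0
    have h00 : v 0 ≤ -ε := by linarith
    have hneg : ∀ t, 0 ≤ t → v t ≤ -ε := by
      intro t ht
      rcases le_abs.mp (hcon t ht) with h | h
      · exfalso
        have hsub : Set.Icc (v 0) (v t) ⊆ v '' Set.Icc 0 t :=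
          intermediate_value_Icc ht (hvc.mono (fun x hx => hx.1))
        obtain ⟨c, hc, hc0⟩ := hsub (show (0:ℝ) ∈ Set.Icc (v 0) (v t) from ⟨by linarith, by linarith⟩)
        exact hnz c hc.1 hc0
      · linarith
    -- derivative bound: D t ≥ δ
    have hDge : ∀ t, 0 ≤ t → δ ≤ D t := by
      intro t ht
      have h1 : 0 ≤ 1 - Real.exp (v t) := by
        have : Real.exp (v t) ≤ 1 := Real.exp_le_one_iff.mpr (by linarith [hneg t ht])
        linarith
      have h2 : 0 ≤ β t * (1 - Real.exp (v t)) :=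
        mul_nonneg (hβ t ht).1 h1
      have h3 : sat (α * v t) ≤ sat (α * (-ε)) :=
        hsat_mono (mul_le_mul_of_nonneg_left (hneg t ht) hα.le)
      have h4 : sat (α * (-ε)) = -δ := by
        rw [hsat, hδdef]
        have hne : α * (-ε) < 0 := by nlinarith
        rw [min_eq_right (by linarith)]
        rcases le_total s (α * ε) with hcase | hcase
        · rw [max_eq_left (by linarith), min_eq_left hcase]
        · rw [max_eq_right (by linarith), min_eq_right hcase]
          ring
      rw [hD]; dsimp only
      rw [h4] at h3
      linarith
    -- so v t ≥ v 0 + δ t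
    have hlin : ∀ t, 0 ≤ t → v 0 + δ * t ≤ v t := by
      intro t ht
      have hanti : AntitoneOn (fun t => δ * t - v t) (Set.Ici 0) := by
        apply stmt_17_aux _ (fun t => δ - D t)
        · intro t ht
          exact ((hasDerivAt_id t).const_mul δ |>.congr_deriv (by ring)).sub (hv t ht)
        · intro t ht
          have := hDge t ht
          linarith
      have := hanti (le_refl (0:ℝ)) ht ht
      simp only at this
      linarith
    obtain ⟨t₀, ht₀def⟩ : ∃ t₀ : ℝ, t₀ = (-ε - v 0) / δ + 1 := ⟨_, rfl⟩
    have ht₀ : 0 ≤ t₀ := by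
      have : 0 ≤ (-ε - v 0) / δ := div_nonneg (by linarith) hδ.le
      linarith
    have h5 := hlin t₀ ht₀
    have h6 := hneg t₀ ht₀
    have h7 : δ * t₀ = (-ε - v 0) + δ := by
      rw [ht₀def, mul_add, mul_one, mul_div_cancel₀ _ (ne_of_gt hδ)]
    linarith
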